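/- Let μ be a finite positive Borel measure on ℝ, α ∈ (0,1), and let T = {E ∈ ℝ : limsup_{ε→0} μ(E−ε,E+ε)/ε^α = ∞}. Then the restriction of μ to the complement of T is α-Hausdorff continuous: for every Borel set A ⊆ ℝ with α-dimensional Hausdorff measure zero, μ(A \ T) = 0. -/

import Mathlib

open MeasureTheory Filter
open scoped ENNReal NNReal Topology

private theorem key_lemma (μ : Measure ℝ) (α : ℝ) (hα0 : 0 < α) (hα1 : α < 1) (n : ℕ)
    (E : Set ℝ)
    (hE : ∀ x ∈ E, ∀ ε : ℝ, 0 < ε → ε ≤ 1 / ((n : ℝ) + 1) →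
      μ (Set.Ioo (x - ε) (x + ε)) ≤ ((n : ℝ≥0∞) + 1) * ENNReal.ofReal (ε ^ α))
    (hH : μH[α] E = 0) : μ E = 0 := by
  have hn : (0 : ℝ) < 1 / (2 * ((n : ℝ) + 1)) := by positivity
  set r : ℝ≥0∞ := ENNReal.ofReal (1 / (2 * ((n : ℝ) + 1))) with hr
  have hr0 : 0 < r := ENNReal.ofReal_pos.2 hn
  have hinf : (⨅ (t : ℕ → Set ℝ) (_ : E ⊆ ⋃ i, t i) (_ : ∀ i, EMetric.diam (t i) ≤ r),
      ∑' i, ⨆ _ : (t i).Nonempty, EMetric.diam (t i) ^ α) = 0 := by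
    refine le_antisymm ?_ zero_le
    rw [← hH, Measure.hausdorffMeasure_apply]
    exact le_iSup₂ (f := fun (r : ℝ≥0∞) (_ : 0 < r) =>
      ⨅ (t : ℕ → Set ℝ) (_ : E ⊆ ⋃ i, t i) (_ : ∀ i, EMetric.diam (t i) ≤ r),
        ∑' i, ⨆ _ : (t i).Nonempty, EMetric.diam (t i) ^ α) r hr0
  suffices h : ∀ m : ℕ, μ E ≤ ((n : ℝ≥0∞) + 1) *
      (ENNReal.ofReal (1 / ((m : ℝ) + 1)) + ENNReal.ofReal (1 / ((m : ℝ) + 1)) * 2) by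
    refine le_antisymm ?_ zero_le
    have h0 : Tendsto (fun m : ℕ => ENNReal.ofReal (1 / ((m : ℝ) + 1))) atTop (𝓝 0) := by
      rw [← ENNReal.ofReal_zero]
      exact (ENNReal.continuous_ofReal.tendsto 0).comp tendsto_one_div_add_atTop_nhds_zero_nat
    have hlim : Tendsto (fun m : ℕ => ((n : ℝ≥0∞) + 1) *
        (ENNReal.ofReal (1 / ((m : ℝ) + 1)) + ENNReal.ofReal (1 / ((m : ℝ) + 1)) * 2))
        atTop (𝓝 0) := by
      have h1 : Tendsto (fun m : ℕ => ENNReal.ofReal (1 / ((m : ℝ) + 1)) +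
          ENNReal.ofReal (1 / ((m : ℝ) + 1)) * 2) atTop (𝓝 (0 + 0 * 2)) :=
        h0.add (ENNReal.Tendsto.mul_const h0 (Or.inr (by norm_num)))
      simpa using ENNReal.Tendsto.const_mul h1 (Or.inr (by finiteness))
    exact ge_of_tendsto' hlim h
  intro m
  have hm : (0 : ℝ) < 1 / ((m : ℝ) + 1) := by positivity
  have hlt : (⨅ (t : ℕ → Set ℝ) (_ : E ⊆ ⋃ i, t i) (_ : ∀ i, EMetric.diam (t i) ≤ r),
      ∑' i, ⨆ _ : (t i).Nonempty, EMetric.diam (t i) ^ α)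
      < ENNReal.ofReal (1 / ((m : ℝ) + 1)) := by
    rw [hinf]; exact ENNReal.ofReal_pos.2 hm
  obtain ⟨t, htE, htd, htsum⟩ : ∃ t : ℕ → Set ℝ, E ⊆ ⋃ i, t i ∧
      (∀ i, EMetric.diam (t i) ≤ r) ∧
      ∑' i, ⨆ _ : (t i).Nonempty, EMetric.diam (t i) ^ α
        < ENNReal.ofReal (1 / ((m : ℝ) + 1)) := by
    simp only [iInf_lt_iff] at hlt
    obtain ⟨t, h1, h2, h3⟩ := hlt
    exact ⟨t, h1, h2, h3⟩
  set c : ℕ → ℝ := fun i =>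
    min (1 / (2 * ((n : ℝ) + 1))) (((1 / ((m : ℝ) + 1)) * (1 / 2) ^ i) ^ (1 / α)) with hc
  have hc0 : ∀ i, 0 < c i := fun i =>
    lt_min hn (Real.rpow_pos_of_pos (by positivity) _)
  have hkey : ∀ i, μ (E ∩ t i) ≤ ((n : ℝ≥0∞) + 1) *
      ((⨆ _ : (t i).Nonempty, EMetric.diam (t i) ^ α) +
        ENNReal.ofReal ((1 / ((m : ℝ) + 1)) * (1 / 2) ^ i)) := by
    intro i
    rcases Set.eq_empty_or_nonempty (E ∩ t i) with he | ⟨x, hxE, hxt⟩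
    · simp [he]
    have htne : (t i).Nonempty := ⟨x, hxt⟩
    set d : ℝ := (EMetric.diam (t i)).toReal with hd
    have hdne : EMetric.diam (t i) ≠ ⊤ := ((htd i).trans_lt ENNReal.ofReal_lt_top).ne
    have hd0 : 0 ≤ d := ENNReal.toReal_nonneg
    have hdle : d ≤ 1 / (2 * ((n : ℝ) + 1)) := ENNReal.toReal_le_of_le_ofReal hn.le (htd i)
    set ε : ℝ := d + c i with hε
    have hε0 : 0 < ε := add_pos_of_nonneg_of_pos hd0 (hc0 i)
    have hεle : ε ≤ 1 / ((n : ℝ) + 1) := by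
      have h1 : c i ≤ 1 / (2 * ((n : ℝ) + 1)) := min_le_left _ _
      have h2' : 1 / (2 * ((n : ℝ) + 1)) = (1 / ((n : ℝ) + 1)) / 2 := by
        rw [div_div, mul_comm]
      have h2 : 1 / (2 * ((n : ℝ) + 1)) + 1 / (2 * ((n : ℝ) + 1)) = 1 / ((n : ℝ) + 1) := by
        rw [h2']; ring
      simp only [hε]; linarith
    have hsub : E ∩ t i ⊆ Set.Ioo (x - ε) (x + ε) := by
      rintro y ⟨hyE, hyt⟩
      have hb : Bornology.IsBounded (t i) := by
        rw [Metric.isBounded_iff_ediam_ne_top]; exact hdne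
      have hdy : dist y x ≤ d := Metric.dist_le_diam_of_mem hb hyt hxt
      have : dist y x < ε := hdy.trans_lt (lt_add_of_pos_right _ (hc0 i))
      rw [← Real.ball_eq_Ioo]
      exact Metric.mem_ball.2 this
    have hofReal : ENNReal.ofReal (ε ^ α) ≤
        EMetric.diam (t i) ^ α + ENNReal.ofReal ((1 / ((m : ℝ) + 1)) * (1 / 2) ^ i) := by
      rw [← ENNReal.ofReal_rpow_of_pos hε0, hε, ENNReal.ofReal_add hd0 (hc0 i).le]
      refine (ENNReal.rpow_add_le_add_rpow _ _ hα0.le hα1.le).trans ?_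
      have e1 : ENNReal.ofReal d ^ α = EMetric.diam (t i) ^ α := by
        rw [hd, ENNReal.ofReal_toReal hdne]
      have e2 : ENNReal.ofReal (c i) ^ α ≤
          ENNReal.ofReal ((1 / ((m : ℝ) + 1)) * (1 / 2) ^ i) := by
        rw [ENNReal.ofReal_rpow_of_pos (hc0 i)]
        refine ENNReal.ofReal_le_ofReal ?_
        have h1 : c i ≤ ((1 / ((m : ℝ) + 1)) * (1 / 2) ^ i) ^ (1 / α) := min_le_right _ _
        have h2 : (c i) ^ α ≤ (((1 / ((m : ℝ) + 1)) * (1 / 2) ^ i) ^ (1 / α)) ^ α :=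
          Real.rpow_le_rpow (hc0 i).le h1 hα0.le
        refine h2.trans_eq ?_
        rw [← Real.rpow_mul (by positivity), one_div_mul_cancel hα0.ne', Real.rpow_one]
      rw [e1]
      exact add_le_add le_rfl e2
    refine (measure_mono hsub).trans ((hE x hxE ε hε0 hεle).trans ?_)
    rw [iSup_pos htne]
    exact mul_le_mul_of_nonneg_left hofReal zero_le
  have hEsub : E ⊆ ⋃ i, E ∩ t i := by
    intro x hx
    rcases Set.mem_iUnion.1 (htE hx) with ⟨i, hi⟩
    exact Set.mem_iUnion.2 ⟨i, hx, hi⟩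
  calc μ E ≤ ∑' i, μ (E ∩ t i) :=
        (measure_mono hEsub).trans (measure_iUnion_le _)
    _ ≤ ∑' i, ((n : ℝ≥0∞) + 1) *
        ((⨆ _ : (t i).Nonempty, EMetric.diam (t i) ^ α) +
          ENNReal.ofReal ((1 / ((m : ℝ) + 1)) * (1 / 2) ^ i)) := ENNReal.tsum_le_tsum hkey
    _ = ((n : ℝ≥0∞) + 1) * ((∑' i, ⨆ _ : (t i).Nonempty, EMetric.diam (t i) ^ α) +
          ∑' i, ENNReal.ofReal ((1 / ((m : ℝ) + 1)) * (1 / 2) ^ i)) := by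
        rw [ENNReal.tsum_mul_left, ENNReal.tsum_add]
    _ ≤ ((n : ℝ≥0∞) + 1) *
        (ENNReal.ofReal (1 / ((m : ℝ) + 1)) + ENNReal.ofReal (1 / ((m : ℝ) + 1)) * 2) := by
        refine mul_le_mul_of_nonneg_left (add_le_add htsum.le ?_) zero_le
        have hsummable : Summable (fun i : ℕ => (1 / ((m : ℝ) + 1)) * (1 / 2) ^ i) :=
          (summable_geometric_two).mul_left _
        rw [← ENNReal.ofReal_tsum_of_nonneg (fun i => by positivity) hsummable,
          tsum_mul_left, tsum_geometric_two]
        exact le_of_eq (by rw [ENNReal.ofReal_mul hm.le]; norm_num)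

theorem stmt_7 (μ : Measure ℝ) [IsFiniteMeasure μ] (α : ℝ) (hα : α ∈ Set.Ioo (0 : ℝ) 1)
    (T : Set ℝ)
    (hT : T = {E : ℝ | limsup (fun ε : ℝ =>
        μ (Set.Ioo (E - ε) (E + ε)) / ENNReal.ofReal (ε ^ α))
        (nhdsWithin 0 (Set.Ioi 0)) = ⊤}) :
    ∀ A : Set ℝ, MeasurableSet A →
      (μH[α] A = 0) → μ (A \ T) = 0 := by
  intro A hA hH0
  set S : ℕ → Set ℝ := fun n => {x : ℝ | ∀ ε : ℝ, 0 < ε → ε ≤ 1 / ((n : ℝ) + 1) →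
    μ (Set.Ioo (x - ε) (x + ε)) ≤ ((n : ℝ≥0∞) + 1) * ENNReal.ofReal (ε ^ α)} with hS
  have hsub : A \ T ⊆ ⋃ n, A ∩ S n := by
    rintro x ⟨hxA, hxT⟩
    rw [hT, Set.mem_setOf_eq] at hxT
    obtain ⟨K, hK⟩ := ENNReal.exists_nat_gt hxT
    have hev : ∀ᶠ ε in nhdsWithin (0:ℝ) (Set.Ioi 0),
        μ (Set.Ioo (x - ε) (x + ε)) / ENNReal.ofReal (ε ^ α) < (K : ℝ≥0∞) :=
      eventually_lt_of_limsup_lt hK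
    rw [(nhdsGT_basis_of_exists_gt ⟨1, one_pos⟩).eventually_iff] at hev
    obtain ⟨δ, hδ0, hδ⟩ := hev
    obtain ⟨N, hN⟩ := exists_nat_gt (1 / δ)
    refine Set.mem_iUnion.2 ⟨K + N, hxA, ?_⟩
    intro ε hε0 hεle
    have h1δ : (0 : ℝ) < 1 / δ := by positivity
    have hεδ : ε < δ := by
      refine lt_of_le_of_lt hεle ?_
      have hN' : 1 / δ < ((K + N : ℕ) : ℝ) + 1 := by push_cast; linarith [Nat.cast_nonneg (α := ℝ) K]
      calc 1 / (((K + N : ℕ) : ℝ) + 1) < 1 / (1 / δ) :=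
            one_div_lt_one_div_of_lt h1δ hN'
        _ = δ := one_div_one_div δ
    have hfε := hδ ⟨hε0, hεδ⟩
    have hb0 : ENNReal.ofReal (ε ^ α) ≠ 0 :=
      (ENNReal.ofReal_pos.2 (Real.rpow_pos_of_pos hε0 _)).ne'
    have hbt : ENNReal.ofReal (ε ^ α) ≠ ⊤ := ENNReal.ofReal_ne_top
    have hle : μ (Set.Ioo (x - ε) (x + ε)) ≤ (K : ℝ≥0∞) * ENNReal.ofReal (ε ^ α) :=
      (ENNReal.div_le_iff hb0 hbt).1 hfε.le
    refine hle.trans (mul_le_mul_of_nonneg_right ?_ zero_le)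
    push_cast
    exact le_add_of_le_of_nonneg (le_add_of_le_of_nonneg le_rfl zero_le) zero_le
  refine measure_mono_null hsub (measure_iUnion_null fun n => ?_)
  refine key_lemma μ α hα.1 hα.2 n (A ∩ S n) (fun x hx => hx.2) ?_
  exact le_antisymm ((measure_mono Set.inter_subset_left).trans hH0.le) zero_le
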